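/- Let P ⊂ R^n be the lower-bound polytope defined by inequalities (for j = 1,…,n) ±(Σ_{i<j} x_i/2^i + x_j + Σ_{i>j} x_i/2^{i−1}) ≤ 1 and (for each N ⊆ {1,…,n} with |N| ≥ 2) ±(−x_{ℓ_N}/|N| + Σ_{i∈N,i≠ℓ_N} x_i/|N| − Σ_{i∉N} x_i/|N|^n) ≤ 1. A point y ∈ {−1,0,1}^n lies in P if and only if: y = 0, or y_{ℓ(y)} = 1 and y_i ∈ {−1,0} for all i > ℓ(y), or y_{ℓ(y)} = −1 and y_i ∈ {0,1} for all i > ℓ(y). -/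

import Mathlib

/-- Left-hand side `Σ_{i<j} x_i/2^{i} + x_j + Σ_{i>j} x_i/2^{i-1}` (1-based indices in the
paper, 0-based here). -/
noncomputable def lhsJ {n : ℕ} (j : Fin n) (x : Fin n → ℝ) : ℝ :=
  (∑ i ∈ Finset.univ.filter (fun i => i < j), x i / 2 ^ (i.val + 1)) + x j +
    ∑ i ∈ Finset.univ.filter (fun i => j < i), x i / 2 ^ i.val

/-- Left-hand side `−x_{ℓ_N}/|N| + Σ_{i∈N, i≠ℓ_N} x_i/|N| − Σ_{i∉N} x_i/|N|^n` where
`ℓ_N = min N`. -/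
noncomputable def lhsN {n : ℕ} (N : Finset (Fin n)) (h : N.Nonempty) (x : Fin n → ℝ) : ℝ :=
  -x (N.min' h) / (N.card : ℝ) + (∑ i ∈ N.erase (N.min' h), x i / (N.card : ℝ)) -
    ∑ i ∈ Nᶜ, x i / (N.card : ℝ) ^ n

/-- Membership in the lower-bound polytope `P`. -/
def inLB {n : ℕ} (x : Fin n → ℝ) : Prop :=
  (∀ j : Fin n, |lhsJ j x| ≤ 1) ∧
    ∀ N : Finset (Fin n), ∀ h : 2 ≤ N.card,
      |lhsN N (Finset.card_pos.mp (lt_of_lt_of_le (by norm_num) h)) x| ≤ 1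

open Finset

/-! ### Auxiliary lemmas -/

lemma geo_sum (M : ℕ) : ∑ i ∈ Finset.range M, ((2:ℝ)⁻¹)^i = 2 - 2*((2:ℝ)⁻¹)^M := by
  induction M with
  | zero => simp
  | succ M ih => rw [Finset.sum_range_succ, ih, pow_succ]; ring

lemma key {n : ℕ} (S : Finset (Fin n)) (f : Fin n → ℕ) (a : ℕ) (han : a ≤ n)
    (hinj : ∀ i ∈ S, ∀ j ∈ S, f i = f j → i = j)
    (hmem : ∀ i ∈ S, a ≤ f i ∧ f i < n) :
    ∑ i ∈ S, ((2:ℝ)⁻¹) ^ (f i) ≤ 2 * ((2:ℝ)⁻¹) ^ a - 2 * ((2:ℝ)⁻¹) ^ n := by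
  have h2 : S.image f ⊆ Finset.Ico a n := by
    intro e he
    obtain ⟨i, hi, rfl⟩ := Finset.mem_image.mp he
    exact Finset.mem_Ico.2 (hmem i hi)
  calc ∑ i ∈ S, ((2:ℝ)⁻¹) ^ (f i) = ∑ e ∈ S.image f, ((2:ℝ)⁻¹)^e :=
        (Finset.sum_image hinj).symm
    _ ≤ ∑ e ∈ Finset.Ico a n, ((2:ℝ)⁻¹)^e :=
        Finset.sum_le_sum_of_subset_of_nonneg h2 (fun i _ _ => by positivity)
    _ = 2*((2:ℝ)⁻¹)^a - 2*((2:ℝ)⁻¹)^n := by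
        rw [Finset.sum_Ico_eq_sub _ han, geo_sum, geo_sum]; ring

def eJ {n : ℕ} (j i : Fin n) : ℕ := if i < j then i.val + 1 else if j < i then i.val else 0

lemma eJ_val {n : ℕ} {m i : Fin n} (h : i ≠ m) :
    eJ m i = if i < m then i.val + 1 else i.val := by
  unfold eJ
  rcases lt_trichotomy i m with hc | hc | hc
  · simp [hc]
  · exact absurd hc h
  · simp [hc, asymm hc]

lemma eJ_self {n : ℕ} (m : Fin n) : eJ m m = 0 := by simp [eJ]

lemma eJ_inj {n : ℕ} {m : Fin n} {i i' : Fin n} (hi : i ≠ m) (hi' : i' ≠ m)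
    (h : eJ m i = eJ m i') : i = i' := by
  rw [eJ_val hi, eJ_val hi'] at h
  have k1 : i < m ∨ m.val < i.val := by
    rcases lt_trichotomy i m with hc | hc | hc
    · exact Or.inl hc
    · exact absurd hc hi
    · exact Or.inr hc
  have k2 : i' < m ∨ m.val < i'.val := by
    rcases lt_trichotomy i' m with hc | hc | hc
    · exact Or.inl hc
    · exact absurd hc hi'
    · exact Or.inr hc
  simp only [Fin.lt_def] at h k1 k2
  apply Fin.ext
  split_ifs at h <;> omega

lemma lhsJ_eq {n : ℕ} (j : Fin n) (x : Fin n → ℝ) :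
    lhsJ j x = ∑ i, x i * ((2:ℝ)⁻¹) ^ (eJ j i) := by
  have hset : Finset.univ.filter (fun i => ¬ i < j) =
      insert j (Finset.univ.filter (fun i => j < i)) := by
    ext i
    simp only [mem_filter, mem_univ, true_and, mem_insert, not_lt]
    constructor
    · intro h
      rcases eq_or_lt_of_le h with h | h
      · exact Or.inl h.symm
      · exact Or.inr h
    · rintro (rfl | h)
      · exact le_refl _
      · exact le_of_lt h
  rw [← Finset.sum_filter_add_sum_filter_not Finset.univ (fun i => i < j)
      (fun i => x i * ((2:ℝ)⁻¹) ^ (eJ j i)), hset, Finset.sum_insert (by simp)]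
  have hA : ∑ i ∈ Finset.univ.filter (fun i => i < j), x i * ((2:ℝ)⁻¹) ^ (eJ j i)
      = ∑ i ∈ Finset.univ.filter (fun i => i < j), x i / 2 ^ (i.val + 1) := by
    apply Finset.sum_congr rfl
    intro i hi
    simp only [mem_filter] at hi
    rw [eJ_val (ne_of_lt hi.2), if_pos hi.2, div_eq_mul_inv, inv_pow]
  have hB : ∑ i ∈ Finset.univ.filter (fun i => j < i), x i * ((2:ℝ)⁻¹) ^ (eJ j i)
      = ∑ i ∈ Finset.univ.filter (fun i => j < i), x i / 2 ^ i.val := by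
    apply Finset.sum_congr rfl
    intro i hi
    simp only [mem_filter] at hi
    rw [eJ_val (ne_of_gt hi.2), if_neg (asymm hi.2), div_eq_mul_inv, inv_pow]
  rw [hA, hB, eJ_self]
  unfold lhsJ
  ring

lemma key1 {n : ℕ} (l : Fin n) :
    ∑ i ∈ Finset.univ.filter (fun i => l < i), ((2:ℝ)⁻¹)^(i.val)
      ≤ ((2:ℝ)⁻¹)^(l.val) - 2*((2:ℝ)⁻¹)^n := by
  have h := key (Finset.univ.filter (fun i => l < i)) Fin.val (l.val+1)
    (by have := l.isLt; omega)
    (fun i _ j _ h => Fin.ext h)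
    (by
      intro i hi
      simp only [mem_filter, mem_univ, true_and, Fin.lt_def] at hi
      exact ⟨by omega, i.isLt⟩)
  have h2 : 2 * ((2:ℝ)⁻¹)^(l.val+1) = ((2:ℝ)⁻¹)^(l.val) := by
    rw [pow_succ]; ring
  linarith

lemma key2 {n : ℕ} {l m : Fin n} (hlm : l < m) :
    ∑ i ∈ Finset.univ.filter (fun i => l < i ∧ i ≠ m), ((2:ℝ)⁻¹)^(eJ m i)
      ≤ ((2:ℝ)⁻¹)^(l.val+1) - 2*((2:ℝ)⁻¹)^n := by
  have hlv : l.val < m.val := Fin.lt_def.mp hlm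
  have h := key (Finset.univ.filter (fun i => l < i ∧ i ≠ m)) (eJ m) (l.val+2)
    (by have := m.isLt; omega)
    (by
      intro i hi j hj hij
      simp only [mem_filter, mem_univ, true_and] at hi hj
      exact eJ_inj hi.2 hj.2 hij)
    (by
      intro i hi
      simp only [mem_filter, mem_univ, true_and] at hi
      have hiv : l.val < i.val := Fin.lt_def.mp hi.1
      rw [eJ_val hi.2]
      split_ifs with c
      · have hc := Fin.lt_def.mp c
        have := m.isLt
        exact ⟨by omega, by omega⟩
      · have : m < i := lt_of_le_of_ne (not_lt.mp c) (Ne.symm hi.2)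
        have hc := Fin.lt_def.mp this
        exact ⟨by omega, i.isLt⟩)
  have h2 : 2 * ((2:ℝ)⁻¹)^(l.val+2) = ((2:ℝ)⁻¹)^(l.val+1) := by
    rw [pow_succ]; ring
  linarith

lemma sum_split {n : ℕ} (l : Fin n) (F : Fin n → ℝ) (h0 : ∀ i, i < l → F i = 0) :
    ∑ i, F i = F l + ∑ i ∈ Finset.univ.filter (fun i => l < i), F i := by
  rw [← Finset.add_sum_erase _ _ (mem_univ l)]
  congr 1
  refine (Finset.sum_subset ?_ ?_).symm
  · intro i hi
    simp only [mem_filter, mem_univ, true_and] at hi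
    simp only [Finset.mem_erase, mem_univ, and_true]
    exact ne_of_gt hi
  · intro i hi hni
    simp only [Finset.mem_erase, mem_univ, and_true] at hi
    simp only [mem_filter, mem_univ, true_and, not_lt] at hni
    exact h0 i (lt_of_le_of_ne hni hi)

lemma sum_split2 {n : ℕ} {l m : Fin n} (hlm : l < m) (F : Fin n → ℝ) :
    ∑ i ∈ Finset.univ.filter (fun i => l < i), F i
      = F m + ∑ i ∈ Finset.univ.filter (fun i => l < i ∧ i ≠ m), F i := by
  rw [← Finset.add_sum_erase _ _ (show m ∈ Finset.univ.filter (fun i => l < i) by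
    simp [hlm])]
  congr 1
  apply Finset.sum_congr
  · ext i
    simp only [Finset.mem_erase, mem_filter, mem_univ, true_and]
    tauto
  · intros; rfl

lemma sum_ge {n : ℕ} {S : Finset (Fin n)} {Y w : Fin n → ℝ}
    (h1 : ∀ i ∈ S, -1 ≤ Y i) (h2 : ∀ i ∈ S, 0 ≤ w i) :
    -∑ i ∈ S, w i ≤ ∑ i ∈ S, Y i * w i := by
  rw [← Finset.sum_neg_distrib]
  apply Finset.sum_le_sum
  intro i hi
  have := mul_le_mul_of_nonneg_right (h1 i hi) (h2 i hi)
  rwa [neg_one_mul] at this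

lemma lhsJ_neg {n : ℕ} (j : Fin n) (x : Fin n → ℝ) :
    lhsJ j (fun i => -x i) = -lhsJ j x := by
  unfold lhsJ
  simp only [neg_div, Finset.sum_neg_distrib]
  ring

lemma lhsN_neg {n : ℕ} (N : Finset (Fin n)) (h : N.Nonempty) (x : Fin n → ℝ) :
    lhsN N h (fun i => -x i) = -lhsN N h x := by
  unfold lhsN
  simp only [neg_div, Finset.sum_neg_distrib]
  ring

lemma inLB_neg {n : ℕ} (x : Fin n → ℝ) : inLB (fun i => -x i) ↔ inLB x := by
  unfold inLB
  simp only [lhsJ_neg, lhsN_neg, abs_neg]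

lemma inLB_zero {n : ℕ} : inLB (fun _ : Fin n => (0:ℝ)) := by
  constructor
  · intro j
    simp [lhsJ]
  · intro N h
    simp [lhsN]

lemma fwd {n : ℕ} (y : Fin n → ℤ) (hy : ∀ i, y i = -1 ∨ y i = 0 ∨ y i = 1)
    (h : inLB (fun i => (y i : ℝ))) (l : Fin n) (hl : y l = 1)
    (hlt : ∀ i, i < l → y i = 0) (m : Fin n) (hm : l < m) : y m = -1 ∨ y m = 0 := by
  by_contra hcon
  have hym : y m = 1 := by
    rcases hy m with h1 | h1 | h1
    · exact absurd (Or.inl h1) hcon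
    · exact absurd (Or.inr h1) hcon
    · exact h1
  set Y : Fin n → ℝ := fun i => (y i : ℝ) with hY
  have hJ := h.1 m
  rw [lhsJ_eq, abs_le] at hJ
  have h0 : ∀ i, i < l → Y i * ((2:ℝ)⁻¹) ^ (eJ m i) = 0 := by
    intro i hi
    simp [hY, hlt i hi]
  have hsplit : ∑ i, Y i * ((2:ℝ)⁻¹) ^ (eJ m i)
      = Y l * ((2:ℝ)⁻¹) ^ (eJ m l) +
        ∑ i ∈ Finset.univ.filter (fun i => l < i), Y i * ((2:ℝ)⁻¹) ^ (eJ m i) :=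
    sum_split l _ h0
  have hsplit2 : ∑ i ∈ Finset.univ.filter (fun i => l < i), Y i * ((2:ℝ)⁻¹) ^ (eJ m i)
      = Y m * ((2:ℝ)⁻¹) ^ (eJ m m) +
        ∑ i ∈ Finset.univ.filter (fun i => l < i ∧ i ≠ m), Y i * ((2:ℝ)⁻¹) ^ (eJ m i) :=
    sum_split2 hm _
  have hwl : eJ m l = l.val + 1 := by rw [eJ_val (ne_of_lt hm), if_pos hm]
  have hYl : Y l = 1 := by simp [hY, hl]
  have hYm : Y m = 1 := by simp [hY, hym]
  have hge : -∑ i ∈ Finset.univ.filter (fun i => l < i ∧ i ≠ m), ((2:ℝ)⁻¹) ^ (eJ m i)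
      ≤ ∑ i ∈ Finset.univ.filter (fun i => l < i ∧ i ≠ m), Y i * ((2:ℝ)⁻¹) ^ (eJ m i) :=
    sum_ge (fun i _ => by
        rcases hy i with h1 | h1 | h1 <;> simp [hY, h1]
        all_goals norm_num)
      (fun i _ => by positivity)
  have hkey := key2 hm
  have hpos : (0:ℝ) < ((2:ℝ)⁻¹)^n := by positivity
  have h2 := hJ.2
  rw [hsplit, hsplit2, hwl, eJ_self, hYl, hYm] at h2
  simp only [pow_zero, mul_one, one_mul] at h2
  linarith

lemma bwd {n : ℕ} (y : Fin n → ℤ) (l : Fin n) (hl : y l = 1)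
    (hlt : ∀ i, i < l → y i = 0) (hgt : ∀ i, l < i → y i = -1 ∨ y i = 0) :
    inLB (fun i => (y i : ℝ)) := by
  set Y : Fin n → ℝ := fun i => (y i : ℝ) with hY
  have hYl : Y l = 1 := by simp [hY, hl]
  have hY0 : ∀ i, i < l → Y i = 0 := fun i hi => by simp [hY, hlt i hi]
  have hYneg : ∀ i, l < i → -1 ≤ Y i ∧ Y i ≤ 0 := by
    intro i hi
    rcases hgt i hi with h | h <;> simp [hY, h]
  have hYabs : ∀ i, |Y i| ≤ 1 := by
    intro i
    rcases lt_trichotomy i l with hc | hc | hc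
    · simp [hY0 i hc]
    · rw [hc, hYl]; norm_num
    · have := hYneg i hc
      rw [abs_le]
      constructor <;> linarith [this.1, this.2]
  constructor
  · intro j
    rw [lhsJ_eq, abs_le]
    have h0 : ∀ i, i < l → Y i * ((2:ℝ)⁻¹) ^ (eJ j i) = 0 := fun i hi => by
      simp [hY0 i hi]
    have hsplit : ∑ i, Y i * ((2:ℝ)⁻¹) ^ (eJ j i)
        = Y l * ((2:ℝ)⁻¹) ^ (eJ j l) +
          ∑ i ∈ Finset.univ.filter (fun i => l < i), Y i * ((2:ℝ)⁻¹) ^ (eJ j i) :=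
      sum_split l _ h0
    have hple : ((2:ℝ)⁻¹) ^ (eJ j l) ≤ 1 := pow_le_one₀ (by norm_num) (by norm_num)
    have hppos : (0:ℝ) ≤ ((2:ℝ)⁻¹) ^ (eJ j l) := by positivity
    constructor
    · -- lower bound
      by_cases hjl : l < j
      · have hsplit2 : ∑ i ∈ Finset.univ.filter (fun i => l < i), Y i * ((2:ℝ)⁻¹) ^ (eJ j i)
            = Y j * ((2:ℝ)⁻¹) ^ (eJ j j) +
              ∑ i ∈ Finset.univ.filter (fun i => l < i ∧ i ≠ j), Y i * ((2:ℝ)⁻¹) ^ (eJ j i) :=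
          sum_split2 hjl _
        have hwl : eJ j l = l.val + 1 := by rw [eJ_val (ne_of_lt hjl), if_pos hjl]
        have hge : -∑ i ∈ Finset.univ.filter (fun i => l < i ∧ i ≠ j), ((2:ℝ)⁻¹) ^ (eJ j i)
            ≤ ∑ i ∈ Finset.univ.filter (fun i => l < i ∧ i ≠ j), Y i * ((2:ℝ)⁻¹) ^ (eJ j i) :=
          sum_ge (fun i hi => by
              simp only [Finset.mem_filter, Finset.mem_univ, true_and] at hi
              exact (hYneg i hi.1).1)
            (fun i _ => by positivity)
        have hkey := key2 hjl
        have hYj := hYneg j hjl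
        have hpos : (0:ℝ) < ((2:ℝ)⁻¹)^n := by positivity
        rw [hsplit, hsplit2, hwl, eJ_self, hYl]
        simp only [pow_zero, mul_one, one_mul]
        linarith [hYj.1]
      · -- j ≤ l
        have heq : ∑ i ∈ Finset.univ.filter (fun i => l < i), Y i * ((2:ℝ)⁻¹) ^ (eJ j i)
            = ∑ i ∈ Finset.univ.filter (fun i => l < i), Y i * ((2:ℝ)⁻¹) ^ (i.val) := by
          apply Finset.sum_congr rfl
          intro i hi
          simp only [Finset.mem_filter, Finset.mem_univ, true_and] at hi
          have hji : j < i := lt_of_le_of_lt (not_lt.mp hjl) hi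
          rw [eJ_val (ne_of_gt hji), if_neg (asymm hji)]
        have hge : -∑ i ∈ Finset.univ.filter (fun i => l < i), ((2:ℝ)⁻¹) ^ (i.val)
            ≤ ∑ i ∈ Finset.univ.filter (fun i => l < i), Y i * ((2:ℝ)⁻¹) ^ (i.val) :=
          sum_ge (fun i hi => by
              simp only [Finset.mem_filter, Finset.mem_univ, true_and] at hi
              exact (hYneg i hi).1)
            (fun i _ => by positivity)
        have hkey := key1 l
        have h1 : ((2:ℝ)⁻¹)^(l.val) ≤ 1 := pow_le_one₀ (by norm_num) (by norm_num)
        have hpos : (0:ℝ) < ((2:ℝ)⁻¹)^n := by positivity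
        rw [hsplit, heq, hYl]
        simp only [one_mul]
        linarith
    · -- upper bound
      rw [hsplit, hYl]
      simp only [one_mul]
      have h2 : ∑ i ∈ Finset.univ.filter (fun i => l < i), Y i * ((2:ℝ)⁻¹) ^ (eJ j i) ≤ 0 :=
        Finset.sum_nonpos (fun i hi => by
          simp only [Finset.mem_filter, Finset.mem_univ, true_and] at hi
          exact mul_nonpos_of_nonpos_of_nonneg (hYneg i hi).2 (by positivity))
      linarith
  · intro N hcard
    have hNne : N.Nonempty := Finset.card_pos.mp (by omega)
    have main : ∀ hne : N.Nonempty, |lhsN N hne Y| ≤ 1 := by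
      intro hne
      unfold lhsN
      set m := N.min' hne with hmdef
      have hmN : m ∈ N := N.min'_mem hne
      have hcn : N.card ≤ n := by
        have := Finset.card_le_card (Finset.subset_univ N)
        simpa using this
      have hcR : (2:ℝ) ≤ (N.card:ℝ) := by exact_mod_cast hcard
      have hc0 : (0:ℝ) < (N.card:ℝ) := by linarith
      have hcn0 : (0:ℝ) < ((N.card:ℝ))^n := by positivity
      have herase_gt : ∀ i ∈ N.erase m, m < i := fun i hi =>
        lt_of_le_of_ne (N.min'_le i (Finset.mem_of_mem_erase hi))
          (Ne.symm (Finset.ne_of_mem_erase hi))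
      have hT2abs : |∑ i ∈ N.erase m, Y i / (N.card:ℝ)| ≤ ((N.card:ℝ) - 1)/(N.card:ℝ) := by
        calc |∑ i ∈ N.erase m, Y i / (N.card:ℝ)| ≤ ∑ i ∈ N.erase m, |Y i / (N.card:ℝ)| :=
              Finset.abs_sum_le_sum_abs _ _
          _ ≤ ∑ _i ∈ N.erase m, 1/(N.card:ℝ) := Finset.sum_le_sum (fun i _ => by
              rw [abs_div, abs_of_pos hc0]
              gcongr
              exact hYabs i)
          _ = ((N.erase m).card : ℝ) * (1/(N.card:ℝ)) := by
              rw [Finset.sum_const, nsmul_eq_mul]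
          _ = ((N.card:ℝ) - 1)/(N.card:ℝ) := by
              rw [Finset.card_erase_of_mem hmN, Nat.cast_sub (by omega)]
              push_cast
              ring
      have hncast : ((Nᶜ.card : ℕ) : ℝ) = (n:ℝ) - (N.card:ℝ) := by
        rw [Finset.card_compl, Fintype.card_fin, Nat.cast_sub hcn]
      have hnat : (n - N.card) ≤ N.card ^ (n-1) := by
        have h1 : n - 1 < 2 ^ (n-1) := by exact Nat.lt_two_pow_self
        have h2 : 2 ^ (n-1) ≤ N.card ^ (n-1) := Nat.pow_le_pow_left hcard _
        omega
      have hn1 : 1 ≤ n := by omega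
      have hfrac : ((n:ℝ) - (N.card:ℝ)) / (N.card:ℝ)^n ≤ 1/(N.card:ℝ) := by
        rw [div_le_div_iff₀ hcn0 hc0]
        have hpow : (N.card:ℝ)^(n-1) * (N.card:ℝ) = (N.card:ℝ)^n := by
          rw [← pow_succ]
          congr 1
          omega
        have hcast : ((n:ℝ) - (N.card:ℝ)) ≤ (N.card:ℝ)^(n-1) := by
          calc ((n:ℝ) - (N.card:ℝ)) = ((n - N.card : ℕ) : ℝ) := by
                rw [Nat.cast_sub hcn]
            _ ≤ ((N.card ^ (n-1) : ℕ) : ℝ) := by exact_mod_cast hnat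
            _ = (N.card:ℝ)^(n-1) := by push_cast; rfl
        nlinarith
      have hT3abs : |∑ i ∈ Nᶜ, Y i / (N.card:ℝ)^n| ≤ 1/(N.card:ℝ) := by
        calc |∑ i ∈ Nᶜ, Y i / (N.card:ℝ)^n| ≤ ∑ i ∈ Nᶜ, |Y i / (N.card:ℝ)^n| :=
              Finset.abs_sum_le_sum_abs _ _
          _ ≤ ∑ _i ∈ Nᶜ, 1/(N.card:ℝ)^n := Finset.sum_le_sum (fun i _ => by
              rw [abs_div, abs_of_pos hcn0]
              gcongr
              exact hYabs i)
          _ = ((Nᶜ.card : ℕ):ℝ) * (1/(N.card:ℝ)^n) := by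
              rw [Finset.sum_const, nsmul_eq_mul]
          _ = ((n:ℝ) - (N.card:ℝ))/(N.card:ℝ)^n := by
              rw [hncast, mul_one_div]
          _ ≤ 1/(N.card:ℝ) := hfrac
      have hone : ((N.card:ℝ) - 1)/(N.card:ℝ) + 1/(N.card:ℝ) = 1 := by
        field_simp
        ring
      have hT2 := abs_le.mp hT2abs
      have hT3 := abs_le.mp hT3abs
      rcases lt_trichotomy m l with hml | hml | hml
      · -- m < l
        have hYm : Y m = 0 := hY0 m hml
        rw [hYm]
        simp only [neg_zero, zero_div, zero_add]
        calc |(∑ i ∈ N.erase m, Y i / (N.card:ℝ)) - ∑ i ∈ Nᶜ, Y i / (N.card:ℝ)^n|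
            ≤ |∑ i ∈ N.erase m, Y i / (N.card:ℝ)| + |∑ i ∈ Nᶜ, Y i / (N.card:ℝ)^n| :=
              abs_sub _ _
          _ ≤ ((N.card:ℝ) - 1)/(N.card:ℝ) + 1/(N.card:ℝ) := add_le_add hT2abs hT3abs
          _ = 1 := hone
      · -- m = l
        have hYm : Y m = 1 := by rw [hml]; exact hYl
        have hT2le : ∑ i ∈ N.erase m, Y i / (N.card:ℝ) ≤ 0 :=
          Finset.sum_nonpos (fun i hi =>
            div_nonpos_of_nonpos_of_nonneg
              ((hYneg i (hml ▸ herase_gt i hi)).2) (le_of_lt hc0))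
        have hT3le : ∑ i ∈ Nᶜ, Y i / (N.card:ℝ)^n ≤ 0 :=
          Finset.sum_nonpos (fun i hi => by
            have hiN : i ∉ N := Finset.mem_compl.mp hi
            have hil : i ≠ l := fun he => hiN (by rw [he, ← hml]; exact hmN)
            rcases lt_trichotomy i l with hc | hc | hc
            · rw [hY0 i hc]; simp
            · exact absurd hc hil
            · exact div_nonpos_of_nonpos_of_nonneg (hYneg i hc).2 (le_of_lt hcn0))
        have hsum : -1/(N.card:ℝ) - ((N.card:ℝ)-1)/(N.card:ℝ) = -1 := by
          field_simp
          ring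
        have hzero : -1/(N.card:ℝ) + 1/(N.card:ℝ) = 0 := by ring
        rw [hYm, abs_le]
        constructor
        · linarith [hT2.1, hT3le]
        · linarith [hT2le, hT3.1]
      · -- l < m
        have hYm := hYneg m hml
        have hT2le : ∑ i ∈ N.erase m, Y i / (N.card:ℝ) ≤ 0 :=
          Finset.sum_nonpos (fun i hi =>
            div_nonpos_of_nonpos_of_nonneg
              ((hYneg i (lt_trans hml (herase_gt i hi))).2) (le_of_lt hc0))
        have hT1le : -Y m / (N.card:ℝ) ≤ 1/(N.card:ℝ) := by
          gcongr
          linarith [hYm.1]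
        have hT1ge : 0 ≤ -Y m / (N.card:ℝ) :=
          div_nonneg (by linarith [hYm.2]) (le_of_lt hc0)
        have hhalf : 1/(N.card:ℝ) ≤ 1/2 := by
          apply one_div_le_one_div_of_le <;> linarith
        rw [abs_le]
        constructor
        · linarith [hT2.1, hT3.2]
        · linarith [hT2le, hT3.1]
    exact main _

theorem stmt_10 {n : ℕ} (hn : 1 ≤ n) (y : Fin n → ℤ)
    (hy : ∀ i, y i = -1 ∨ y i = 0 ∨ y i = 1) :
    inLB (fun i => (y i : ℝ)) ↔
      (y = 0 ∨
        ∃ l : Fin n, (∀ i, i < l → y i = 0) ∧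
          ((y l = 1 ∧ ∀ i, l < i → (y i = -1 ∨ y i = 0)) ∨
           (y l = -1 ∧ ∀ i, l < i → (y i = 0 ∨ y i = 1)))) := by
  constructor
  · intro h
    by_cases h0 : y = 0
    · exact Or.inl h0
    right
    have hne : (Finset.univ.filter (fun i => y i ≠ 0)).Nonempty := by
      rcases Function.ne_iff.mp h0 with ⟨i, hi⟩
      exact ⟨i, by simpa using hi⟩
    set l := (Finset.univ.filter (fun i => y i ≠ 0)).min' hne with hldef
    have hlmem : y l ≠ 0 := by
      have := Finset.min'_mem _ hne
      simpa using this
    have hlt : ∀ i, i < l → y i = 0 := by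
      intro i hi
      by_contra hne2
      have : l ≤ i := Finset.min'_le _ _ (by simp [hne2])
      exact absurd hi (not_lt.mpr this)
    refine ⟨l, hlt, ?_⟩
    rcases hy l with h1 | h1 | h1
    · -- y l = -1 : use the negated function
      right
      refine ⟨h1, fun i hi => ?_⟩
      have hcast : (fun i => ((-y i : ℤ) : ℝ)) = fun i => -((y i : ℝ)) := by
        funext i; push_cast; ring
      have hneg : inLB (fun i => ((-y i : ℤ) : ℝ)) := by
        rw [hcast]
        exact (inLB_neg _).mpr h
      have hz := fwd (fun i => -y i)
        (fun i => by rcases hy i with h2 | h2 | h2 <;> simp [h2])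
        hneg l (by simp [h1]) (fun i hi => by simp [hlt i hi]) i hi
      rcases hz with h2 | h2
      · right
        have h3 : -y i = -1 := h2
        omega
      · left
        have h3 : -y i = 0 := h2
        omega
    · exact absurd h1 hlmem
    · exact Or.inl ⟨h1, fun i hi => fwd y hy h l h1 hlt i hi⟩
  · rintro (rfl | ⟨l, hlt, ⟨h1, hgt⟩ | ⟨h1, hgt⟩⟩)
    · have : (fun i => (((0 : Fin n → ℤ)) i : ℝ)) = fun _ : Fin n => (0:ℝ) := by
        funext i; simp
      rw [this]
      exact inLB_zero
    · exact bwd y l h1 hlt hgt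
    · have hcast : (fun i => ((-y i : ℤ) : ℝ)) = fun i => -((y i : ℝ)) := by
        funext i; push_cast; ring
      have hb := bwd (fun i => -y i) l (by simp [h1])
        (fun i hi => by simp [hlt i hi])
        (fun i hi => by rcases hgt i hi with h2 | h2 <;> simp [h2])
      rw [hcast] at hb
      exact (inLB_neg _).mp hb
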